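/- arXiv:2603.05823 — 7 statements merged into one kernel-verified Lean document; each statement's English description precedes it below -/
import Mathlib

section
/- In the field RatFunc ℚ of rational functions in one variable t over ℚ, the following identity holds: ((1 + t^4 + t^6 + t^8)(1 − t^6)(1 − t^4) · (1 + t^{−4} + t^{−6} + t^{−8})(1 − t^{−6})(1 − t^{−4})) / ((1 − t^{−6})(1 − t^{−4})(1 − t^{−2})) + ((1 + t^2 + t^4 + t^6)(1 − t^2)(1 − t^{10}) · (1 + t^{−2} + t^{−4} + t^{−6})(1 − t^{−2})(1 − t^{−10})) / ((1 − t^{−2})(1 − t^{−10})(1 − t^2)) = 1 − (t^2 + 2t^4 + t^6) + t^{14} + t^{16} + t^{18}. (This computes the ℂ*-equivariant Euler pairing χ(O_{D_4}, O_{D_4}) of the unique multiplicity-4 Cohen–Macaulay curve D_4 supported on the fixed line L, with arithmetic genus 0.) -/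
noncomputable def t : RatFunc ℚ := RatFunc.X

set_option maxHeartbeats 1000000 in
/-- The equivariant Euler pairing
`χ(O_{D₄}, O_{D₄}) = 1 − (t² + 2t⁴ + t⁶) + t¹⁴ + t¹⁶ + t¹⁸` of the unique
multiplicity-4 Cohen–Macaulay curve `D₄` supported on the fixed line `L` of the
Mukai–Umemura threefold, with arithmetic genus 0. -/
theorem stmt_7 :
    ((1 + t ^ 4 + t ^ 6 + t ^ 8) * (1 - t ^ 6) * (1 - t ^ 4)
        * ((1 + t ^ (-4 : ℤ) + t ^ (-6 : ℤ) + t ^ (-8 : ℤ)) * (1 - t ^ (-6 : ℤ)) * (1 - t ^ (-4 : ℤ))))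
        / ((1 - t ^ (-6 : ℤ)) * (1 - t ^ (-4 : ℤ)) * (1 - t ^ (-2 : ℤ)))
      + ((1 + t ^ 2 + t ^ 4 + t ^ 6) * (1 - t ^ 2) * (1 - t ^ 10)
        * ((1 + t ^ (-2 : ℤ) + t ^ (-4 : ℤ) + t ^ (-6 : ℤ)) * (1 - t ^ (-2 : ℤ)) * (1 - t ^ (-10 : ℤ))))
        / ((1 - t ^ (-2 : ℤ)) * (1 - t ^ (-10 : ℤ)) * (1 - t ^ 2))
    = 1 - (t ^ 2 + 2 * t ^ 4 + t ^ 6) + t ^ 14 + t ^ 16 + t ^ 18 := by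
  have ht : t ≠ 0 := RatFunc.X_ne_zero
  have hp : ∀ k : ℕ, (t : RatFunc ℚ) ^ k ≠ 0 := fun k => pow_ne_zero _ ht
  have key : ∀ k : ℕ, 0 < k → (t : RatFunc ℚ) ^ k - 1 ≠ 0 := by
    intro k hk
    have h1 : (Polynomial.X ^ k - Polynomial.C (1:ℚ)) ≠ 0 := Polynomial.X_pow_sub_C_ne_zero hk 1
    have h2 : algebraMap (Polynomial ℚ) (RatFunc ℚ) (Polynomial.X ^ k - Polynomial.C 1) = t ^ k - 1 := by
      simp [t, map_sub, map_pow, RatFunc.algebraMap_X]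
    rw [← h2]
    exact RatFunc.algebraMap_ne_zero h1
  have k2 := key 2 (by norm_num)
  have k4 := key 4 (by norm_num)
  have k6 := key 6 (by norm_num)
  have k10 := key 10 (by norm_num)
  have e : ∀ k : ℕ, (1 : RatFunc ℚ) - (t ^ k)⁻¹ = (t ^ k - 1) / t ^ k := by
    intro k
    have := hp k
    field_simp
  simp only [zpow_neg]
  norm_cast
  rw [e 2, e 4, e 6, e 10]
  have hd1 : (t ^ 6 - 1) / t ^ 6 * ((t ^ 4 - 1) / t ^ 4) * ((t ^ 2 - 1) / t ^ 2) ≠ 0 :=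
    mul_ne_zero (mul_ne_zero (div_ne_zero k6 (hp 6)) (div_ne_zero k4 (hp 4)))
      (div_ne_zero k2 (hp 2))
  have h2' : (1 : RatFunc ℚ) - t ^ 2 ≠ 0 := fun h => k2 (by linear_combination -h)
  have hd2 : (t ^ 2 - 1) / t ^ 2 * ((t ^ 10 - 1) / t ^ 10) * (1 - t ^ 2) ≠ 0 :=
    mul_ne_zero (mul_ne_zero (div_ne_zero k2 (hp 2)) (div_ne_zero k10 (hp 10))) h2'
  have hq1 : (t : RatFunc ℚ) ^ 6 * (t ^ 2 - 1) ≠ 0 := mul_ne_zero (hp 6) k2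
  have T1 : (1 + t ^ 4 + t ^ 6 + t ^ 8) * (1 - t ^ 6) * (1 - t ^ 4)
        * ((1 + (t ^ 4)⁻¹ + (t ^ 6)⁻¹ + (t ^ 8)⁻¹) * ((t ^ 6 - 1) / t ^ 6) * ((t ^ 4 - 1) / t ^ 4))
        / ((t ^ 6 - 1) / t ^ 6 * ((t ^ 4 - 1) / t ^ 4) * ((t ^ 2 - 1) / t ^ 2))
      = (1 + t ^ 4 + t ^ 6 + t ^ 8) * (1 - t ^ 6) * (1 - t ^ 4) * (t ^ 8 + t ^ 4 + t ^ 2 + 1)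
        / (t ^ 6 * (t ^ 2 - 1)) := by
    rw [div_eq_div_iff hd1 hq1]
    field_simp
  have T2 : (1 + t ^ 2 + t ^ 4 + t ^ 6) * (1 - t ^ 2) * (1 - t ^ 10)
        * ((1 + (t ^ 2)⁻¹ + (t ^ 4)⁻¹ + (t ^ 6)⁻¹) * ((t ^ 2 - 1) / t ^ 2) * ((t ^ 10 - 1) / t ^ 10))
        / ((t ^ 2 - 1) / t ^ 2 * ((t ^ 10 - 1) / t ^ 10) * (1 - t ^ 2))
      = (1 + t ^ 2 + t ^ 4 + t ^ 6) ^ 2 * (1 - t ^ 10) / t ^ 6 := by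
    rw [div_eq_div_iff hd2 (hp 6)]
    field_simp
    ring
  rw [T1, T2, div_add_div _ _ hq1 (hp 6), div_eq_iff (mul_ne_zero hq1 (hp 6))]
  ring
end

section
/- Let F₁ = (1 + E(−4) + E(−6) + E(−8))·(1 − E(−6))·(1 − E(−4))·(1 − E(12)) and F₂ = (1 + E(−2) + E(−4) + E(−6))·(1 − E(−2))·(1 − E(−10))·(1 − E(10)) in ℚ[[λ]]. Then 2 · 21 · ( (144/22) · c₃(F₁)/((−12)·48) + (100/22) · c₃(F₂)/((−10)·(−40)) ) = 168. (This is the equivariant localization computation of the Donaldson–Thomas primary invariant ⟨τ₀(h₂)⟩₄ = 168 of the local Calabi–Yau 4-fold over the Mukai–Umemura threefold in curve class 4[line], where the only contributing fixed points of the moduli space are the multiplicity-4 lines D_{±4}.) -/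
noncomputable def E (a : ℤ) : PowerSeries ℚ :=
  PowerSeries.mk fun n => (a : ℚ) ^ n / n.factorial

noncomputable def c (k : ℕ) (F : PowerSeries ℚ) : ℚ := PowerSeries.coeff k F

lemma E_eq (a : ℤ) : E a = PowerSeries.rescale (a : ℚ) (PowerSeries.exp ℚ) := by
  ext n
  simp [E, PowerSeries.exp, PowerSeries.coeff_rescale, PowerSeries.coeff_mk, div_eq_mul_inv,
    Algebra.algebraMap_self_apply]

lemma E_mul (a b : ℤ) : E a * E b = E (a + b) := by
  rw [E_eq, E_eq, E_eq, PowerSeries.exp_mul_exp_eq_exp_add, Int.cast_add]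

lemma E_zero : E 0 = 1 := by
  ext n
  simp [E, PowerSeries.coeff_one]
  rcases n with _ | n <;> simp

lemma c_add (F G : PowerSeries ℚ) : c 3 (F + G) = c 3 F + c 3 G := map_add _ _ _
lemma c_sub (F G : PowerSeries ℚ) : c 3 (F - G) = c 3 F - c 3 G := map_sub _ _ _

lemma c3E (a : ℤ) : c 3 (E a) = (a : ℚ) ^ 3 / 6 := by
  simp [c, E, PowerSeries.coeff_mk]
  norm_num [Nat.factorial]

/-- Equivariant localization computation of the Donaldson–Thomas primary invariant
`⟨τ₀(h₂)⟩₄ = 168` of the local Calabi–Yau 4-fold over the Mukai–Umemura threefold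
in curve class `4[line]`; the only contributing fixed points are the multiplicity-4
lines `D₊₄`, `D₋₄`. -/
theorem stmt_10 :
    let F₁ : PowerSeries ℚ :=
      (1 + E (-4) + E (-6) + E (-8)) * (1 - E (-6)) * (1 - E (-4)) * (1 - E 12)
    let F₂ : PowerSeries ℚ :=
      (1 + E (-2) + E (-4) + E (-6)) * (1 - E (-2)) * (1 - E (-10)) * (1 - E 10)
    2 * 21 * ((144 / 22) * c 3 F₁ / ((-12) * 48)
        + (100 / 22) * c 3 F₂ / ((-10) * (-40))) = (168 : ℚ) := by
  intro F₁ F₂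
  have h1 : (1 : PowerSeries ℚ) = E 0 := E_zero.symm
  simp only [F₁, F₂, h1, mul_add, add_mul, mul_sub, sub_mul, E_mul]
  norm_num
  simp only [c_add, c_sub, c3E]
  norm_num
end

section
/- Let F₁ = (1 + E(−4) + E(−6) + E(−8))·(1 − E(−6))·(1 − E(−4))·(1 − E(12)) and F₂ = (1 + E(−2) + E(−4) + E(−6))·(1 − E(−2))·(1 − E(−10))·(1 − E(10)) in ℚ[[λ]]. Then 2 · 21 · ( 12 · c₄(F₁)/((−12)·48) + 10 · c₄(F₂)/((−10)·(−40)) ) = −168. (This is the equivariant localization computation of the descendent invariant ⟨τ₁(h₁)⟩₄ = −168 of the local Calabi–Yau 4-fold over the Mukai–Umemura threefold in curve class 4[line].) -/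
lemma c4_E (a : ℤ) : c 4 (E a) = (a : ℚ) ^ 4 / 24 := by
  simp [c, E]
  norm_num [Nat.factorial]

/-- Equivariant localization computation of the descendent invariant
`⟨τ₁(h₁)⟩₄ = −168` of the local Calabi–Yau 4-fold over the Mukai–Umemura threefold
in curve class `4[line]`. -/
theorem stmt_11 :
    let F₁ : PowerSeries ℚ :=
      (1 + E (-4) + E (-6) + E (-8)) * (1 - E (-6)) * (1 - E (-4)) * (1 - E 12)
    let F₂ : PowerSeries ℚ :=
      (1 + E (-2) + E (-4) + E (-6)) * (1 - E (-2)) * (1 - E (-10)) * (1 - E 10)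
    2 * 21 * (12 * c 4 F₁ / ((-12) * 48)
        + 10 * c 4 F₂ / ((-10) * (-40))) = (-168 : ℚ) := by
  intro F₁ F₂
  have h₁ : c 4 F₁ = 4032 := by
    show c 4 ((1 + E (-4) + E (-6) + E (-8)) * (1 - E (-6)) * (1 - E (-4)) * (1 - E 12)) = 4032
    simp only [mul_add, add_mul, mul_sub, sub_mul, one_mul, mul_one, E_mul]
    have hadd : ∀ F G : PowerSeries ℚ, c 4 (F + G) = c 4 F + c 4 G := fun F G => map_add _ F G
    have hsub : ∀ F G : PowerSeries ℚ, c 4 (F - G) = c 4 F - c 4 G := fun F G => map_sub _ F G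
    have hone : c 4 (1 : PowerSeries ℚ) = 0 := by simp [c, PowerSeries.coeff_one]
    simp only [hadd, hsub, hone, c4_E]
    norm_num
  have h₂ : c 4 F₂ = 3200 := by
    show c 4 ((1 + E (-2) + E (-4) + E (-6)) * (1 - E (-2)) * (1 - E (-10)) * (1 - E 10)) = 3200
    simp only [mul_add, add_mul, mul_sub, sub_mul, one_mul, mul_one, E_mul]
    have hadd : ∀ F G : PowerSeries ℚ, c 4 (F + G) = c 4 F + c 4 G := fun F G => map_add _ F G
    have hsub : ∀ F G : PowerSeries ℚ, c 4 (F - G) = c 4 F - c 4 G := fun F G => map_sub _ F G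
    have hone : c 4 (1 : PowerSeries ℚ) = 0 := by simp [c, PowerSeries.coeff_one]
    simp only [hadd, hsub, hone, c4_E]
    norm_num
  rw [h₁, h₂]
  norm_num
end

section
/- Let F₁ = (1 + E(−4) + E(−6) + E(−8))·(1 − E(−6))·(1 − E(−4))·(1 − E(12)) and F₂ = (1 + E(−2) + E(−4) + E(−6))·(1 − E(−2))·(1 − E(−10))·(1 − E(10)) in ℚ[[λ]]. Then 2 · 21 · ( c₅(F₁)/((−12)·48) + c₅(F₂)/((−10)·(−40)) ) = −28. (This is the equivariant localization computation of the descendent invariant ⟨τ₂(1)⟩₄ = −28 of the local Calabi–Yau 4-fold over the Mukai–Umemura threefold in curve class 4[line]; in particular ⟨τ₂(h₀)⟩₄ / ⟨τ₀(h₂)⟩₄ = −1/6.) -/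
/-- Equivariant localization computation of the descendent invariant
`⟨τ₂(1)⟩₄ = −28` of the local Calabi–Yau 4-fold over the Mukai–Umemura threefold
in curve class `4[line]`. -/
theorem stmt_12 :
    let F₁ : PowerSeries ℚ :=
      (1 + E (-4) + E (-6) + E (-8)) * (1 - E (-6)) * (1 - E (-4)) * (1 - E 12)
    let F₂ : PowerSeries ℚ :=
      (1 + E (-2) + E (-4) + E (-6)) * (1 - E (-2)) * (1 - E (-10)) * (1 - E 10)
    2 * 21 * (c 5 F₁ / ((-12) * 48) + c 5 F₂ / ((-10) * (-40))) = (-28 : ℚ) := by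
  simp only [c, E, PowerSeries.coeff_mul, Finset.Nat.sum_antidiagonal_eq_sum_range_succ_mk,
    map_add, map_sub, map_one, PowerSeries.coeff_mk, PowerSeries.coeff_one,
    Finset.sum_range_succ, Finset.sum_range_zero]
  norm_num [Nat.factorial]
end

section
/- Let G₁ = (1 − E(−6))·(1 − E(−4))·(1 − E(12)) and G₂ = (1 − E(−2))·(1 − E(−10))·(1 − E(10)) in ℚ[[λ]]. Then the following three identities hold: (i) 2 · ( (144/22) · c₃(G₁)/((−12)·48) + (100/22) · c₃(G₂)/((−10)·(−40)) ) = 2; (ii) 2 · ( 12 · c₄(G₁)/((−12)·48) + 10 · c₄(G₂)/((−10)·(−40)) ) = 22; (iii) 2 · ( c₅(G₁)/((−12)·48) + c₅(G₂)/((−10)·(−40)) ) = −1/3. (These are the localization computations of the degree-1 invariants ⟨τ₀(h₂)⟩₁ = 2, ⟨τ₁(h₁)⟩₁ = 22, ⟨τ₂(1)⟩₁ = −1/3 of the local Calabi–Yau 4-fold over the Mukai–Umemura threefold.) -/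
lemma ckey (a b d : ℤ) (k : ℕ) :
    c k ((1 - E a) * (1 - E b) * (1 - E d)) =
    ∑ p ∈ Finset.HasAntidiagonal.antidiagonal k, (∑ q ∈ Finset.HasAntidiagonal.antidiagonal p.1,
      ((if q.1 = 0 then 0 else -((a:ℚ)^q.1 / q.1.factorial)) *
       (if q.2 = 0 then 0 else -((b:ℚ)^q.2 / q.2.factorial)))) *
      (if p.2 = 0 then 0 else -((d:ℚ)^p.2 / p.2.factorial)) := by
  simp only [c, PowerSeries.coeff_mul]
  refine Finset.sum_congr rfl fun p _ => ?_
  congr 1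
  · refine Finset.sum_congr rfl fun q _ => ?_
    congr 1 <;> simp [E, PowerSeries.coeff_one, sub_eq_iff_eq_add] <;>
      split <;> simp_all [PowerSeries.coeff_mk]
  · simp [E, PowerSeries.coeff_one] ; split <;> simp_all [PowerSeries.coeff_mk]

lemma c3G1 : c 3 ((1 - E (-6)) * (1 - E (-4)) * (1 - E 12)) = -288 := by
  rw [ckey]
  simp only [Finset.Nat.sum_antidiagonal_eq_sum_range_succ_mk, Finset.sum_range_succ,
    Finset.sum_range_zero]
  norm_num [Nat.factorial]

lemma c3G2 : c 3 ((1 - E (-2)) * (1 - E (-10)) * (1 - E 10)) = -200 := by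
  rw [ckey]
  simp only [Finset.Nat.sum_antidiagonal_eq_sum_range_succ_mk, Finset.sum_range_succ,
    Finset.sum_range_zero]
  norm_num [Nat.factorial]

lemma c4G1 : c 4 ((1 - E (-6)) * (1 - E (-4)) * (1 - E 12)) = -288 := by
  rw [ckey]
  simp only [Finset.Nat.sum_antidiagonal_eq_sum_range_succ_mk, Finset.sum_range_succ,
    Finset.sum_range_zero]
  norm_num [Nat.factorial]

lemma c4G2 : c 4 ((1 - E (-2)) * (1 - E (-10)) * (1 - E 10)) = 200 := by
  rw [ckey]
  simp only [Finset.Nat.sum_antidiagonal_eq_sum_range_succ_mk, Finset.sum_range_succ,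
    Finset.sum_range_zero]
  norm_num [Nat.factorial]

lemma c5G1 : c 5 ((1 - E (-6)) * (1 - E (-4)) * (1 - E 12)) = -2496 := by
  rw [ckey]
  simp only [Finset.Nat.sum_antidiagonal_eq_sum_range_succ_mk, Finset.sum_range_succ,
    Finset.sum_range_zero]
  norm_num [Nat.factorial]

lemma c5G2 : c 5 ((1 - E (-2)) * (1 - E (-10)) * (1 - E 10)) = -1800 := by
  rw [ckey]
  simp only [Finset.Nat.sum_antidiagonal_eq_sum_range_succ_mk, Finset.sum_range_succ,
    Finset.sum_range_zero]
  norm_num [Nat.factorial]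

/-- Localization computations of the degree-1 invariants `⟨τ₀(h₂)⟩₁ = 2`,
`⟨τ₁(h₁)⟩₁ = 22`, `⟨τ₂(1)⟩₁ = −1/3` of the local Calabi–Yau 4-fold over the
Mukai–Umemura threefold. -/
theorem stmt_13 :
    let G₁ : PowerSeries ℚ := (1 - E (-6)) * (1 - E (-4)) * (1 - E 12)
    let G₂ : PowerSeries ℚ := (1 - E (-2)) * (1 - E (-10)) * (1 - E 10)
    (2 * ((144 / 22) * c 3 G₁ / ((-12) * 48)
        + (100 / 22) * c 3 G₂ / ((-10) * (-40))) = (2 : ℚ))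
    ∧ (2 * (12 * c 4 G₁ / ((-12) * 48)
        + 10 * c 4 G₂ / ((-10) * (-40))) = (22 : ℚ))
    ∧ (2 * (c 5 G₁ / ((-12) * 48) + c 5 G₂ / ((-10) * (-40))) = (-1 / 3 : ℚ)) := by
  refine ⟨?_, ?_, ?_⟩
  · rw [c3G1, c3G2]; norm_num
  · rw [c4G1, c4G2]; norm_num
  · rw [c5G1, c5G2]; norm_num
end

section
/- Let H₁ = (1 + E(−4))·(1 − E(−6))·(1 − E(−4))·(1 − E(12)) and H₂ = (1 + E(−2))·(1 − E(−2))·(1 − E(−10))·(1 − E(10)) in ℚ[[λ]]. Then the following three identities hold: (i) 2 · (7/4) · ( (144/22) · c₃(H₁)/((−12)·48) + (100/22) · c₃(H₂)/((−10)·(−40)) ) = 7; (ii) 2 · (7/4) · ( 12 · c₄(H₁)/((−12)·48) + 10 · c₄(H₂)/((−10)·(−40)) ) = 28; (iii) 2 · (7/4) · ( c₅(H₁)/((−12)·48) + c₅(H₂)/((−10)·(−40)) ) = −7/6. (These are the localization computations of the degree-2 invariants ⟨τ₀(h₂)⟩₂ = 7, ⟨τ₁(h₁)⟩₂ = 28,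 ⟨τ₂(1)⟩₂ = −7/6 of the local Calabi–Yau 4-fold over the Mukai–Umemura threefold.) -/
/-- Localization computations of the degree-2 invariants `⟨τ₀(h₂)⟩₂ = 7`,
`⟨τ₁(h₁)⟩₂ = 28`, `⟨τ₂(1)⟩₂ = −7/6` of the local Calabi–Yau 4-fold over the
Mukai–Umemura threefold. -/
theorem stmt_14 :
    let H₁ : PowerSeries ℚ := (1 + E (-4)) * (1 - E (-6)) * (1 - E (-4)) * (1 - E 12)
    let H₂ : PowerSeries ℚ := (1 + E (-2)) * (1 - E (-2)) * (1 - E (-10)) * (1 - E 10)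
    (2 * (7 / 4) * ((144 / 22) * c 3 H₁ / ((-12) * 48)
        + (100 / 22) * c 3 H₂ / ((-10) * (-40))) = (7 : ℚ))
    ∧ (2 * (7 / 4) * (12 * c 4 H₁ / ((-12) * 48)
        + 10 * c 4 H₂ / ((-10) * (-40))) = (28 : ℚ))
    ∧ (2 * (7 / 4) * (c 5 H₁ / ((-12) * 48)
        + c 5 H₂ / ((-10) * (-40))) = (-7 / 6 : ℚ)) := by
  intro H₁ H₂
  refine ⟨?_, ?_, ?_⟩ <;>
  · simp only [H₁, H₂, c, E, PowerSeries.coeff_mul, PowerSeries.coeff_one,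
      PowerSeries.coeff_mk, map_add, map_sub,
      Finset.Nat.sum_antidiagonal_eq_sum_range_succ_mk,
      Finset.sum_range_succ, Finset.sum_range_zero]
    norm_num [Nat.factorial]
end

section
/- In the polynomial ring R = ℚ[a₁,…,a₁₂], consider the ideals I₁ = ⟨a₁, a₂, a₃, a₄, a₅, a₆, a₇, a₈, a₁₀, a₁₁, a₁₂⟩, I₂ = ⟨a₁, a₂, a₃, a₄, a₆, a₇, a₈, a₁₁, a₁₂, 6a₅ + a₁₀, a₁₀²⟩, I₃ = ⟨a₂, a₃, a₄, a₇, a₈, a₁₂, 5a₆ + a₁₁, 6a₅ + a₁₀, 10a₁ − a₁₁, a₁₁², a₁₀a₁₁, 5a₁₀² − 6a₉a₁₁⟩, and I₄ = ⟨a₃, a₄, a₈, a₇ + 3a₁₂, 5a₆ + a₁₁, 6a₅ + a₁₀, 5a₂ − 9a₁₂, 10a₁ − a₁₁, a₁₀a₁₂, a₁₁², a₁₀a₁₁ − 18a₉a₁₂, 5a₁₀² − 6a₉a₁₁ + 12a₁₂⟩. Then I₁ = I₂ + ⟨a₅⟩, I₂ = I₃ + ⟨a₁⟩, and I₃ = I₄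 + ⟨a₁₂⟩. -/
open MvPolynomial

/-- `a i` is the variable `aᵢ` (for `1 ≤ i ≤ 12`) of `ℚ[a₁,…,a₁₂]`. -/
noncomputable def a (i : ℕ) : MvPolynomial (Fin 12) ℚ := X (Fin.ofNat 12 (i - 1 : ℕ))

/-- Defining ideal of the fixed line `D₁ = L`. -/
noncomputable def I₁ : Ideal (MvPolynomial (Fin 12) ℚ) :=
  Ideal.span {a 1, a 2, a 3, a 4, a 5, a 6, a 7, a 8, a 10, a 11, a 12}

/-- Defining ideal of the multiplicity-2 curve `D₂`. -/
noncomputable def I₂ : Ideal (MvPolynomial (Fin 12) ℚ) :=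
  Ideal.span {a 1, a 2, a 3, a 4, a 6, a 7, a 8, a 11, a 12, 6 * a 5 + a 10, a 10 ^ 2}

/-- Defining ideal of the multiplicity-3 curve `D₃`. -/
noncomputable def I₃ : Ideal (MvPolynomial (Fin 12) ℚ) :=
  Ideal.span {a 2, a 3, a 4, a 7, a 8, a 12, 5 * a 6 + a 11, 6 * a 5 + a 10,
    10 * a 1 - a 11, a 11 ^ 2, a 10 * a 11, 5 * a 10 ^ 2 - 6 * a 9 * a 11}

/-- Defining ideal of the multiplicity-4 curve `D₄`. -/
noncomputable def I₄ : Ideal (MvPolynomial (Fin 12) ℚ) :=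
  Ideal.span {a 3, a 4, a 8, a 7 + 3 * a 12, 5 * a 6 + a 11, 6 * a 5 + a 10,
    5 * a 2 - 9 * a 12, 10 * a 1 - a 11, a 10 * a 12, a 11 ^ 2,
    a 10 * a 11 - 18 * a 9 * a 12, 5 * a 10 ^ 2 - 6 * a 9 * a 11 + 12 * a 12}

section Helpers

variable {R : Type*} [CommRing R] {I : Ideal R} {x : R}

private lemma comb1 (g : R) (c : R) (h : g ∈ I) (e : x = c * g) : x ∈ I :=
  e ▸ I.mul_mem_left c h

private lemma comb2 (g₁ g₂ : R) (c₁ c₂ : R) (h₁ : g₁ ∈ I) (h₂ : g₂ ∈ I)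
    (e : x = c₁ * g₁ + c₂ * g₂) : x ∈ I :=
  e ▸ I.add_mem (I.mul_mem_left c₁ h₁) (I.mul_mem_left c₂ h₂)

private lemma comb3 (g₁ g₂ g₃ : R) (c₁ c₂ c₃ : R) (h₁ : g₁ ∈ I) (h₂ : g₂ ∈ I) (h₃ : g₃ ∈ I)
    (e : x = c₁ * g₁ + c₂ * g₂ + c₃ * g₃) : x ∈ I :=
  e ▸ I.add_mem (I.add_mem (I.mul_mem_left c₁ h₁) (I.mul_mem_left c₂ h₂)) (I.mul_mem_left c₃ h₃)

end Helpers

/-- In a `ℚ`-polynomial ring, one can cancel nonzero integer scalars in ideal membership. -/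
private lemma mem_of_nat_mul_mem {I : Ideal (MvPolynomial (Fin 12) ℚ)}
    {x : MvPolynomial (Fin 12) ℚ} (n : ℕ) (hn : (n : ℚ) ≠ 0)
    (h : (n : MvPolynomial (Fin 12) ℚ) * x ∈ I) : x ∈ I := by
  have h2 : C ((n : ℚ)⁻¹) * ((n : MvPolynomial (Fin 12) ℚ) * x) ∈ I := I.mul_mem_left _ h
  rwa [← map_natCast (C : ℚ →+* MvPolynomial (Fin 12) ℚ) n, ← mul_assoc, ← C_mul,
    inv_mul_cancel₀ hn, C_1, one_mul] at h2

set_option maxHeartbeats 2000000 in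
/-- The Cohen–Macaulay filtration `L = D₁ ⊂ D₂ ⊂ D₃ ⊂ D₄`: the kernel of each
restriction map `O_{D_{k+1}} ↠ O_{D_k}` is generated by the class of `a₅`, `a₁`,
`a₁₂` respectively. -/
theorem stmt_16 :
    I₁ = I₂ + Ideal.span {a 5} ∧ I₂ = I₃ + Ideal.span {a 1} ∧ I₃ = I₄ + Ideal.span {a 12} := by
  refine ⟨?_, ?_, ?_⟩
  · -- I₁ = I₂ + ⟨a₅⟩
    rw [I₁, I₂, Submodule.add_eq_sup, ← Ideal.span_union]
    apply le_antisymm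
    · rw [Ideal.span_le]
      intro x hx
      simp only [Set.mem_insert_iff, Set.mem_singleton_iff] at hx
      obtain rfl|rfl|rfl|rfl|rfl|rfl|rfl|rfl|rfl|rfl|rfl := hx
      · exact Ideal.subset_span (by simp)
      · exact Ideal.subset_span (by simp)
      · exact Ideal.subset_span (by simp)
      · exact Ideal.subset_span (by simp)
      · exact Ideal.subset_span (by simp)
      · exact Ideal.subset_span (by simp)
      · exact Ideal.subset_span (by simp)
      · exact Ideal.subset_span (by simp)
      · -- a 10
        exact comb2 (6 * a 5 + a 10) (a 5) 1 (-6)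
          (Ideal.subset_span (by simp)) (Ideal.subset_span (by simp)) (by ring)
      · exact Ideal.subset_span (by simp)
      · exact Ideal.subset_span (by simp)
    · rw [Ideal.span_le]
      intro x hx
      simp only [Set.mem_union, Set.mem_insert_iff, Set.mem_singleton_iff] at hx
      obtain (rfl|rfl|rfl|rfl|rfl|rfl|rfl|rfl|rfl|rfl|rfl)|rfl := hx
      · exact Ideal.subset_span (by simp)
      · exact Ideal.subset_span (by simp)
      · exact Ideal.subset_span (by simp)
      · exact Ideal.subset_span (by simp)
      · exact Ideal.subset_span (by simp)
      · exact Ideal.subset_span (by simp)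
      · exact Ideal.subset_span (by simp)
      · exact Ideal.subset_span (by simp)
      · exact Ideal.subset_span (by simp)
      · -- 6 a5 + a10
        exact comb2 (a 5) (a 10) 6 1
          (Ideal.subset_span (by simp)) (Ideal.subset_span (by simp)) (by ring)
      · -- a10 ^ 2
        exact comb1 (a 10) (a 10) (Ideal.subset_span (by simp)) (by ring)
      · exact Ideal.subset_span (by simp)
  · -- I₂ = I₃ + ⟨a₁⟩
    rw [I₂, I₃, Submodule.add_eq_sup, ← Ideal.span_union]
    apply le_antisymm
    · rw [Ideal.span_le]
      intro x hx
      simp only [Set.mem_insert_iff, Set.mem_singleton_iff] at hx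
      obtain rfl|rfl|rfl|rfl|rfl|rfl|rfl|rfl|rfl|rfl|rfl := hx
      · exact Ideal.subset_span (by simp)
      · exact Ideal.subset_span (by simp)
      · exact Ideal.subset_span (by simp)
      · exact Ideal.subset_span (by simp)
      · -- a 6
        refine mem_of_nat_mul_mem 5 (by norm_num) ?_
        exact comb3 (5 * a 6 + a 11) (10 * a 1 - a 11) (a 1) 1 1 (-10)
          (Ideal.subset_span (by simp)) (Ideal.subset_span (by simp))
          (Ideal.subset_span (by simp)) (by push_cast; ring)
      · exact Ideal.subset_span (by simp)
      · exact Ideal.subset_span (by simp)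
      · -- a 11
        exact comb2 (a 1) (10 * a 1 - a 11) 10 (-1)
          (Ideal.subset_span (by simp)) (Ideal.subset_span (by simp)) (by ring)
      · exact Ideal.subset_span (by simp)
      · exact Ideal.subset_span (by simp)
      · -- a10 ^ 2
        refine mem_of_nat_mul_mem 5 (by norm_num) ?_
        exact comb3 (5 * a 10 ^ 2 - 6 * a 9 * a 11) (10 * a 1 - a 11) (a 1)
          1 (-6 * a 9) (60 * a 9)
          (Ideal.subset_span (by simp)) (Ideal.subset_span (by simp))
          (Ideal.subset_span (by simp)) (by push_cast; ring)
    · rw [Ideal.span_le]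
      intro x hx
      simp only [Set.mem_union, Set.mem_insert_iff, Set.mem_singleton_iff] at hx
      obtain (rfl|rfl|rfl|rfl|rfl|rfl|rfl|rfl|rfl|rfl|rfl|rfl)|rfl := hx
      · exact Ideal.subset_span (by simp)
      · exact Ideal.subset_span (by simp)
      · exact Ideal.subset_span (by simp)
      · exact Ideal.subset_span (by simp)
      · exact Ideal.subset_span (by simp)
      · exact Ideal.subset_span (by simp)
      · -- 5 a6 + a11
        exact comb2 (a 6) (a 11) 5 1
          (Ideal.subset_span (by simp)) (Ideal.subset_span (by simp)) (by ring)
      · exact Ideal.subset_span (by simp)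
      · -- 10 a1 - a11
        exact comb2 (a 1) (a 11) 10 (-1)
          (Ideal.subset_span (by simp)) (Ideal.subset_span (by simp)) (by ring)
      · -- a11 ^ 2
        exact comb1 (a 11) (a 11) (Ideal.subset_span (by simp)) (by ring)
      · -- a10 * a11
        exact comb1 (a 11) (a 10) (Ideal.subset_span (by simp)) (by ring)
      · -- 5 a10^2 - 6 a9 a11
        exact comb2 (a 10 ^ 2) (a 11) 5 (-6 * a 9)
          (Ideal.subset_span (by simp)) (Ideal.subset_span (by simp)) (by ring)
      · exact Ideal.subset_span (by simp)
  · -- I₃ = I₄ + ⟨a₁₂⟩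
    rw [I₃, I₄, Submodule.add_eq_sup, ← Ideal.span_union]
    apply le_antisymm
    · rw [Ideal.span_le]
      intro x hx
      simp only [Set.mem_insert_iff, Set.mem_singleton_iff] at hx
      obtain rfl|rfl|rfl|rfl|rfl|rfl|rfl|rfl|rfl|rfl|rfl|rfl := hx
      · -- a 2
        refine mem_of_nat_mul_mem 5 (by norm_num) ?_
        exact comb2 (5 * a 2 - 9 * a 12) (a 12) 1 9
          (Ideal.subset_span (by simp)) (Ideal.subset_span (by simp)) (by push_cast; ring)
      · exact Ideal.subset_span (by simp)
      · exact Ideal.subset_span (by simp)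
      · -- a 7
        exact comb2 (a 7 + 3 * a 12) (a 12) 1 (-3)
          (Ideal.subset_span (by simp)) (Ideal.subset_span (by simp)) (by ring)
      · exact Ideal.subset_span (by simp)
      · exact Ideal.subset_span (by simp)
      · exact Ideal.subset_span (by simp)
      · exact Ideal.subset_span (by simp)
      · exact Ideal.subset_span (by simp)
      · exact Ideal.subset_span (by simp)
      · -- a10 * a11
        exact comb2 (a 10 * a 11 - 18 * a 9 * a 12) (a 12) 1 (18 * a 9)
          (Ideal.subset_span (by simp)) (Ideal.subset_span (by simp)) (by ring)
      · -- 5 a10^2 - 6 a9 a11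
        exact comb2 (5 * a 10 ^ 2 - 6 * a 9 * a 11 + 12 * a 12) (a 12) 1 (-12)
          (Ideal.subset_span (by simp)) (Ideal.subset_span (by simp)) (by ring)
    · rw [Ideal.span_le]
      intro x hx
      simp only [Set.mem_union, Set.mem_insert_iff, Set.mem_singleton_iff] at hx
      obtain (rfl|rfl|rfl|rfl|rfl|rfl|rfl|rfl|rfl|rfl|rfl|rfl)|rfl := hx
      · exact Ideal.subset_span (by simp)
      · exact Ideal.subset_span (by simp)
      · exact Ideal.subset_span (by simp)
      · -- a7 + 3 a12
        exact comb2 (a 7) (a 12) 1 3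
          (Ideal.subset_span (by simp)) (Ideal.subset_span (by simp)) (by ring)
      · exact Ideal.subset_span (by simp)
      · exact Ideal.subset_span (by simp)
      · -- 5 a2 - 9 a12
        exact comb2 (a 2) (a 12) 5 (-9)
          (Ideal.subset_span (by simp)) (Ideal.subset_span (by simp)) (by ring)
      · exact Ideal.subset_span (by simp)
      · -- a10 * a12
        exact comb1 (a 12) (a 10) (Ideal.subset_span (by simp)) (by ring)
      · exact Ideal.subset_span (by simp)
      · -- a10 a11 - 18 a9 a12
        exact comb2 (a 10 * a 11) (a 12) 1 (-18 * a 9)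
          (Ideal.subset_span (by simp)) (Ideal.subset_span (by simp)) (by ring)
      · -- 5 a10^2 - 6 a9 a11 + 12 a12
        exact comb2 (5 * a 10 ^ 2 - 6 * a 9 * a 11) (a 12) 1 12
          (Ideal.subset_span (by simp)) (Ideal.subset_span (by simp)) (by ring)
      · exact Ideal.subset_span (by simp)
end
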